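/- Suppose C = D_0ᵀ·(D_1·D_2⋯D_d)·D_{d+1} has ℓ-block-support concentration, i.e., every coefficient C_e lies in the F-span of {C_f : bs(f) ≤ ℓ - 1}, and suppose for every i ∈ {0,1,...,d+1} the polynomial D_i has ℓ'-support concentration, i.e., every entrywise coefficient D_{i,g} lies in the F-span of {D_{i,g'} : g' an exponent vector over x_i of support size at most ℓ' - 1}. Then for every exponent vector e, the coefficient C_e lies in the F-span of {C_f : f an exponent vector of support size at most (ℓ-1)·(ℓ'-1)}; in particular C has ((ℓ-1)(ℓ'-1)+1)-support concentration. -/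

import Mathlib

open Finset

/-- The block-support `bS(e)` of an exponent vector `e`: the set of blocks `i` (under the
block assignment `π` of variables to blocks) on which `e` is not identically zero. -/
def blockSupport {n d : ℕ} (π : Fin n → Fin d) (e : Fin n → ℕ) : Finset (Fin d) :=
  Finset.univ.filter fun i => ∃ j, π j = i ∧ e j ≠ 0

/-- The support size of an exponent vector: the number of variables occurring in it with a
positive exponent. -/
def suppSize {n : ℕ} (e : Fin n → ℕ) : ℕ :=
  (Finset.univ.filter fun j => e j ≠ 0).card

/-- The restriction of the exponent vector `e` to block `i` (as a function). -/
def blockRestrict {n d : ℕ} (π : Fin n → Fin d) (i : Fin d) (e : Fin n → ℕ) :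
    Fin n → ℕ :=
  fun j => if π j = i then e j else 0

/-- The monomial `x_i^{e_i}`: the restriction of the exponent vector `e` to block `i`. -/
noncomputable def blockMonomial {n d : ℕ} (π : Fin n → Fin d) (i : Fin d)
    (e : Fin n → ℕ) : Fin n →₀ ℕ :=
  Finsupp.equivFunOnFinite.symm (blockRestrict π i e)

/-- The matrix `∏_{i=1}^d D_{i,e_i}`, where the middle factors occupy the blocks
`1, …, d` of `Fin (d+2)`. -/
noncomputable def midCoeff {F : Type*} [Field F] {w n d : ℕ} (π : Fin n → Fin (d + 2))
    (Dmid : Fin d → Matrix (Fin w) (Fin w) (MvPolynomial (Fin n) F)) (e : Fin n → ℕ) :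
    Matrix (Fin w) (Fin w) F :=
  ((List.finRange d).map fun i =>
    (Dmid i).map (MvPolynomial.coeff (blockMonomial π i.succ.castSucc e))).prod

/-- The coefficient `C_e = D_{0,e_0}ᵀ·(∏_{i=1}^d D_{i,e_i})·D_{d+1,e_{d+1}}` of `x^e` in
`C = D_0ᵀ·(D_1⋯D_d)·D_{d+1}`, the end vectors occupying blocks `0` and `d+1`. -/
noncomputable def fullCoeff {F : Type*} [Field F] {w n d : ℕ} (π : Fin n → Fin (d + 2))
    (D0 Dlast : Fin w → MvPolynomial (Fin n) F)
    (Dmid : Fin d → Matrix (Fin w) (Fin w) (MvPolynomial (Fin n) F)) (e : Fin n → ℕ) :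
    F :=
  dotProduct (fun a => MvPolynomial.coeff (blockMonomial π 0 e) (D0 a))
    ((midCoeff π Dmid e).mulVec
      fun b => MvPolynomial.coeff (blockMonomial π (Fin.last (d + 1)) e) (Dlast b))


lemma listSpan {F : Type*} [Field F] {w : ℕ} {ι : Type*} [DecidableEq ι]
    (B : Set (Fin w → F)) (Cs : ι → Set (Matrix (Fin w) (Fin w) F)) :
    ∀ (l : List ι), l.Nodup →
    ∀ (Ms : ι → Matrix (Fin w) (Fin w) F), (∀ i ∈ l, Ms i ∈ Submodule.span F (Cs i)) →
    ∀ (v : Fin w → F), v ∈ Submodule.span F B →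
    ∀ (u : Fin w → F),
      dotProduct u (((l.map Ms).prod).mulVec v) ∈ Submodule.span F
        {c | ∃ (Ms' : ι → Matrix (Fin w) (Fin w) F) (b : Fin w → F), (∀ i ∈ l, Ms' i ∈ Cs i) ∧ b ∈ B ∧
          c = dotProduct u (((l.map Ms').prod).mulVec b)} := by
  intro l
  induction l with
  | nil =>
    intro _ Ms _ v hv u
    simp only [List.map_nil, List.prod_nil, Matrix.one_mulVec, List.not_mem_nil,
      false_implies, implies_true, true_and]
    induction hv using Submodule.span_induction with
    | mem b hb => exact Submodule.subset_span ⟨Ms, b, hb, rfl⟩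
    | zero => simp only [dotProduct_zero]; exact zero_mem _
    | add x y hx hy ihx ihy =>
        rw [dotProduct_add]; exact add_mem ihx ihy
    | smul a x hx ih =>
        rw [dotProduct_smul]; exact Submodule.smul_mem _ _ ih
  | cons i l IH =>
    intro hnd Ms hMs v hv u
    have hil : i ∉ l := (List.nodup_cons.mp hnd).1
    have hndl : l.Nodup := (List.nodup_cons.mp hnd).2
    have hMi : Ms i ∈ Submodule.span F (Cs i) := hMs i List.mem_cons_self
    simp only [List.map_cons, List.prod_cons]
    have key : ∀ M, M ∈ Submodule.span F (Cs i) →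
        dotProduct u ((M * (l.map Ms).prod).mulVec v) ∈ Submodule.span F
          {c | ∃ (Ms' : ι → Matrix (Fin w) (Fin w) F) (b : Fin w → F),
            (∀ j ∈ i :: l, Ms' j ∈ Cs j) ∧ b ∈ B ∧
            c = dotProduct u (((( i :: l).map Ms').prod).mulVec b)} := by
      intro M hM
      induction hM using Submodule.span_induction with
      | mem m hm =>
        rw [← Matrix.mulVec_mulVec, Matrix.dotProduct_mulVec]
        refine Submodule.span_le.mpr ?_
          (IH hndl Ms (fun j hj => hMs j (List.mem_cons_of_mem i hj)) v hv (Matrix.vecMul u m))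
        rintro c ⟨Ms', b, hMs', hb, rfl⟩
        refine Submodule.subset_span ⟨Function.update Ms' i m, b, ?_, hb, ?_⟩
        · intro j hj
          rcases List.mem_cons.mp hj with rfl | hj'
          · simpa using hm
          · rw [Function.update_of_ne (by rintro rfl; exact hil hj')]
            exact hMs' j hj'
        · have hmap : l.map (Function.update Ms' i m) = l.map Ms' := by
            refine List.map_congr_left ?_
            intro j hj
            exact Function.update_of_ne (by rintro rfl; exact hil hj) _ _
          rw [List.map_cons, List.prod_cons, Function.update_self, hmap,
            ← Matrix.mulVec_mulVec, Matrix.dotProduct_mulVec, Matrix.dotProduct_mulVec,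
            Matrix.dotProduct_mulVec]
      | zero =>
        simp only [Matrix.zero_mul, Matrix.zero_mulVec, dotProduct_zero]
        exact zero_mem _
      | add x y hx hy ihx ihy =>
        rw [Matrix.add_mul, Matrix.add_mulVec, dotProduct_add]
        exact add_mem ihx ihy
      | smul a x hx ih =>
        rw [Matrix.smul_mul, Matrix.smul_mulVec, dotProduct_smul]
        exact Submodule.smul_mem _ _ ih
    exact key _ hMi


lemma restrict_eq_zero_of_not_mem {n d : ℕ} (π : Fin n → Fin d) (f : Fin n → ℕ)
    (k : Fin d) (hk : k ∉ blockSupport π f) : blockRestrict π k f = 0 := by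
  funext j
  simp only [blockSupport, Finset.mem_filter, Finset.mem_univ, true_and, not_exists] at hk
  unfold blockRestrict
  by_cases h : π j = k
  · simp only [h, if_pos]
    by_contra hf
    exact hk j ⟨h, hf⟩
  · simp [h]

lemma assemble {n d L L' : ℕ} (π : Fin n → Fin d) (S : Finset (Fin d)) (hS : S.card ≤ L)
    (H : Fin d → (Fin n → ℕ))
    (h1 : ∀ k, k ∉ S → blockRestrict π k (H k) = 0)
    (h2 : ∀ k ∈ S, suppSize (blockRestrict π k (H k)) ≤ L') :
    ∃ g : Fin n → ℕ, suppSize g ≤ L * L' ∧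
      ∀ k, blockRestrict π k g = blockRestrict π k (H k) := by
  refine ⟨fun j => blockRestrict π (π j) (H (π j)) j, ?_, ?_⟩
  · have hsub : (Finset.univ.filter fun j => blockRestrict π (π j) (H (π j)) j ≠ 0)
        ⊆ S.biUnion fun k => Finset.univ.filter fun j => blockRestrict π k (H k) j ≠ 0 := by
      intro j hj
      simp only [Finset.mem_filter, Finset.mem_univ, true_and] at hj
      have hkS : π j ∈ S := by
        by_contra hk
        rw [h1 _ hk] at hj
        exact hj rfl
      exact Finset.mem_biUnion.mpr ⟨π j, hkS,
        by simp only [Finset.mem_filter, Finset.mem_univ, true_and]; exact hj⟩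
    calc suppSize (fun j => blockRestrict π (π j) (H (π j)) j)
        ≤ (S.biUnion fun k => Finset.univ.filter fun j => blockRestrict π k (H k) j ≠ 0).card :=
          Finset.card_le_card hsub
      _ ≤ ∑ k ∈ S, (Finset.univ.filter fun j => blockRestrict π k (H k) j ≠ 0).card :=
          Finset.card_biUnion_le
      _ ≤ ∑ _k ∈ S, L' := Finset.sum_le_sum fun k hk => h2 k hk
      _ = S.card * L' := by rw [Finset.sum_const, smul_eq_mul]
      _ ≤ L * L' := Nat.mul_le_mul_right _ hS
  · intro k
    funext j
    unfold blockRestrict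
    by_cases h : π j = k
    · subst h; simp
    · simp [h]

/-- Composition: if `C = D_0ᵀ·(D_1⋯D_d)·D_{d+1}` has `ℓ`-block-support concentration and
each factor `D_i` has `ℓ'`-support concentration, then `C` has
`((ℓ-1)(ℓ'-1)+1)`-support concentration. -/
theorem concentration_composition (F : Type*) [Field F] (w n d ℓ ℓ' : ℕ)
    (hw : 1 ≤ w) (hd : 1 ≤ d) (hℓ : 1 ≤ ℓ) (hℓ' : 1 ≤ ℓ')
    (π : Fin n → Fin (d + 2))
    (D0 Dlast : Fin w → MvPolynomial (Fin n) F)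
    (Dmid : Fin d → Matrix (Fin w) (Fin w) (MvPolynomial (Fin n) F))
    -- variable-disjointness: each factor only involves the variables of its own block
    (hvars0 : ∀ a, ∀ j ∈ (D0 a).vars, π j = 0)
    (hvarsLast : ∀ b, ∀ j ∈ (Dlast b).vars, π j = Fin.last (d + 1))
    (hvarsMid : ∀ i a b, ∀ j ∈ (Dmid i a b).vars, π j = i.succ.castSucc)
    -- `ℓ`-block-support concentration of `C`
    (hblock : ∀ e : Fin n → ℕ, fullCoeff π D0 Dlast Dmid e ∈ Submodule.span F
      {c : F | ∃ f, (blockSupport π f).card ≤ ℓ - 1 ∧ c = fullCoeff π D0 Dlast Dmid f})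
    -- `ℓ'`-support concentration of `D_0`
    (hconc0 : ∀ g : Fin n → ℕ,
      (fun a => MvPolynomial.coeff (blockMonomial π 0 g) (D0 a)) ∈ Submodule.span F
        {v : Fin w → F | ∃ g', suppSize (blockRestrict π 0 g') ≤ ℓ' - 1 ∧
          v = fun a => MvPolynomial.coeff (blockMonomial π 0 g') (D0 a)})
    -- `ℓ'`-support concentration of `D_{d+1}`
    (hconcLast : ∀ g : Fin n → ℕ,
      (fun b => MvPolynomial.coeff (blockMonomial π (Fin.last (d + 1)) g) (Dlast b)) ∈
        Submodule.span F
          {v : Fin w → F | ∃ g',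
            suppSize (blockRestrict π (Fin.last (d + 1)) g') ≤ ℓ' - 1 ∧
            v = fun b => MvPolynomial.coeff (blockMonomial π (Fin.last (d + 1)) g')
              (Dlast b)})
    -- `ℓ'`-support concentration of each middle factor `D_i`
    (hconcMid : ∀ (i : Fin d) (g : Fin n → ℕ),
      (Dmid i).map (MvPolynomial.coeff (blockMonomial π i.succ.castSucc g)) ∈
        Submodule.span F
          {M : Matrix (Fin w) (Fin w) F | ∃ g',
            suppSize (blockRestrict π i.succ.castSucc g') ≤ ℓ' - 1 ∧
            M = (Dmid i).map (MvPolynomial.coeff (blockMonomial π i.succ.castSucc g'))}) :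
    ∀ e : Fin n → ℕ, fullCoeff π D0 Dlast Dmid e ∈ Submodule.span F
      {c : F | ∃ f, suppSize f ≤ (ℓ - 1) * (ℓ' - 1) ∧
        c = fullCoeff π D0 Dlast Dmid f} := by
  classical
  intro e
  refine Submodule.span_le.mpr ?_ (hblock e)
  rintro c ⟨f, hf, rfl⟩
  simp only [SetLike.mem_coe]
  set S : Finset (Fin (d + 2)) := blockSupport π f with hSdef
  set Cnd : Fin (d + 2) → (Fin n → ℕ) → Prop := fun k g' =>
    if k ∈ S then suppSize (blockRestrict π k g') ≤ ℓ' - 1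
    else blockRestrict π k g' = 0 with hCnd
  set U0 : Set (Fin w → F) := {v | ∃ g', Cnd 0 g' ∧
    v = fun a => MvPolynomial.coeff (blockMonomial π 0 g') (D0 a)} with hU0
  set V0 : Set (Fin w → F) := {v | ∃ g', Cnd (Fin.last (d + 1)) g' ∧
    v = fun b => MvPolynomial.coeff (blockMonomial π (Fin.last (d + 1)) g') (Dlast b)} with hV0
  set Cs : Fin d → Set (Matrix (Fin w) (Fin w) F) := fun i =>
    {M | ∃ g', Cnd i.succ.castSucc g' ∧
      M = (Dmid i).map (MvPolynomial.coeff (blockMonomial π i.succ.castSucc g'))} with hCs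
  have hcond_of_f : ∀ k, k ∉ S → Cnd k f := fun k hk => by
    simp only [hCnd, if_neg hk]
    exact restrict_eq_zero_of_not_mem π f k hk
  set Msf : Fin d → Matrix (Fin w) (Fin w) F := fun i =>
    (Dmid i).map (MvPolynomial.coeff (blockMonomial π i.succ.castSucc f)) with hMsf
  set vf : Fin w → F :=
    fun b => MvPolynomial.coeff (blockMonomial π (Fin.last (d + 1)) f) (Dlast b) with hvf
  have hu : (fun a => MvPolynomial.coeff (blockMonomial π 0 f) (D0 a))
      ∈ Submodule.span F U0 := by
    by_cases h0 : (0 : Fin (d + 2)) ∈ S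
    · refine Submodule.span_mono ?_ (hconc0 f)
      rintro v ⟨g', hg', rfl⟩
      exact ⟨g', by simp only [hCnd, if_pos h0]; exact hg', rfl⟩
    · exact Submodule.subset_span ⟨f, hcond_of_f 0 h0, rfl⟩
  have hv : vf ∈ Submodule.span F V0 := by
    by_cases h0 : Fin.last (d + 1) ∈ S
    · refine Submodule.span_mono ?_ (hconcLast f)
      rintro v ⟨g', hg', rfl⟩
      exact ⟨g', by simp only [hCnd, if_pos h0]; exact hg', rfl⟩
    · exact Submodule.subset_span ⟨f, hcond_of_f _ h0, rfl⟩
  have hM : ∀ i ∈ List.finRange d, Msf i ∈ Submodule.span F (Cs i) := by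
    intro i _
    by_cases h0 : i.succ.castSucc ∈ S
    · refine Submodule.span_mono ?_ (hconcMid i f)
      rintro M ⟨g', hg', rfl⟩
      exact ⟨g', by simp only [hCnd, if_pos h0]; exact hg', rfl⟩
    · exact Submodule.subset_span ⟨f, hcond_of_f _ h0, rfl⟩
  have main : ∀ u, u ∈ Submodule.span F U0 →
      dotProduct u ((((List.finRange d).map Msf).prod).mulVec vf) ∈
        Submodule.span F {c : F | ∃ f, suppSize f ≤ (ℓ - 1) * (ℓ' - 1) ∧
          c = fullCoeff π D0 Dlast Dmid f} := by
    intro u hu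
    induction hu using Submodule.span_induction with
    | zero => simp only [zero_dotProduct]; exact zero_mem _
    | add x y hx hy ihx ihy =>
        rw [add_dotProduct]; exact add_mem ihx ihy
    | smul a x hx ih =>
        rw [smul_dotProduct]; exact Submodule.smul_mem _ _ ih
    | mem u hu0 =>
        refine Submodule.span_le.mpr ?_
          (listSpan V0 Cs (List.finRange d) (List.nodup_finRange d) Msf hM vf hv u)
        rintro c ⟨Ms', b, hMs', hb, rfl⟩
        obtain ⟨g0, hg0c, hg0e⟩ := hu0
        obtain ⟨gl, hglc, hgle⟩ := hb
        choose gm hgmc hgme using fun i => hMs' i (List.mem_finRange i)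
        set H : Fin (d + 2) → (Fin n → ℕ) :=
          Fin.cases g0 (Fin.lastCases gl gm) with hH
        have hH0 : H 0 = g0 := by simp only [hH, Fin.cases_zero]
        have hHlast : H (Fin.last (d + 1)) = gl := by
          simp only [hH, ← Fin.succ_last, Fin.cases_succ, Fin.lastCases_last]
        have hHmid : ∀ i : Fin d, H i.succ.castSucc = gm i := fun i => by
          simp only [hH, ← Fin.succ_castSucc, Fin.cases_succ, Fin.lastCases_castSucc]
        have hcondH : ∀ k, Cnd k (H k) := by
          intro k
          rcases Fin.eq_zero_or_eq_succ k with rfl | ⟨k', rfl⟩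
          · rw [hH0]; exact hg0c
          · rcases Fin.eq_castSucc_or_eq_last k' with ⟨i, rfl⟩ | rfl
            · rw [Fin.succ_castSucc, hHmid]; exact hgmc i
            · rw [Fin.succ_last, hHlast]; exact hglc
        obtain ⟨g, hgsupp, hgres⟩ := assemble π S hf H
          (fun k hk => by have := hcondH k; simpa only [hCnd, if_neg hk] using this)
          (fun k hk => by have := hcondH k; simpa only [hCnd, if_pos hk] using this)
        refine Submodule.subset_span ⟨g, hgsupp, ?_⟩
        have e0 : blockMonomial π 0 g = blockMonomial π 0 g0 :=
          congrArg Finsupp.equivFunOnFinite.symm (by rw [hgres 0, hH0])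
        have el : blockMonomial π (Fin.last (d + 1)) g
            = blockMonomial π (Fin.last (d + 1)) gl :=
          congrArg Finsupp.equivFunOnFinite.symm (by rw [hgres _, hHlast])
        have em : ∀ i : Fin d, blockMonomial π i.succ.castSucc g
            = blockMonomial π i.succ.castSucc (gm i) := fun i =>
          congrArg Finsupp.equivFunOnFinite.symm (by rw [hgres _, hHmid])
        have hlist : (List.finRange d).map
            (fun i => (Dmid i).map
              (MvPolynomial.coeff (blockMonomial π i.succ.castSucc g)))
            = (List.finRange d).map Ms' :=
          List.map_congr_left fun i _ => by rw [em i, ← hgme i]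
        subst hg0e hgle
        unfold fullCoeff midCoeff
        rw [e0, el, hlist]
  exact main _ hu
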